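/- For every positive integer n: ∑ over a, b from 1 to n with gcd(a,n)=gcd(b,n)=1 of lcm(gcd(a-1,n), gcd(b-1,n)) = φ(n)² · ∏_{p^ν ∥ n} (1 + 2ν − (p^ν − 1)/(p^{ν−1}(p−1)²)). -/

import Mathlib

open Finset

/-! Auxiliary definitions -/

noncomputable def Ee (p : ℕ) (k : ℕ) : ℚ := if k = 0 then 0 else (p:ℚ)^(k-1)*((p:ℚ)-1)
noncomputable def Uu (p : ℕ) (k : ℕ) : ℚ := if k = 0 then 1 else 1/((p:ℚ)^(k-1)*((p:ℚ)-1))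
noncomputable def PhiQ (p : ℕ) (k : ℕ) : ℚ := if k = 0 then 1 else (p:ℚ)^(k-1)*((p:ℚ)-1)

noncomputable def gL (p i j : ℕ) : ℚ :=
  (if j = 0 then Ee p i else 0) + (if i = 0 then Ee p j else 0)
    - (if i = j then Ee p i else 0) + (if i = 0 ∧ j = 0 then 1 else 0)

noncomputable def gS (p i j : ℕ) : ℚ :=
  (if j = 0 then 1 else 0) + (if i = 0 then 1 else 0) - (if i = j then Uu p i else 0)

noncomputable def locF (g : ℕ → ℕ → ℕ → ℚ) (d e : ℕ) : ℚ :=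
  ∏ p ∈ (d * e).primeFactors, g p (d.factorization p) (e.factorization p)

lemma gL_zero (p : ℕ) : gL p 0 0 = 1 := by simp [gL, Ee]

lemma gS_zero (p : ℕ) : gS p 0 0 = 1 := by simp [gS, Uu]


lemma sum_divisors_coprime_mul (f : ℕ → ℚ) {m n : ℕ} (h : Nat.Coprime m n)
    (hm : m ≠ 0) (hn : n ≠ 0) :
    ∑ d ∈ (m * n).divisors, f d = ∑ u ∈ m.divisors, ∑ v ∈ n.divisors, f (u * v) := by
  rw [← Finset.sum_product']
  refine Finset.sum_nbij' (fun d => (Nat.gcd d m, Nat.gcd d n)) (fun p => p.1 * p.2)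
    ?_ ?_ ?_ ?_ ?_
  · intro d hd
    rw [Nat.mem_divisors] at hd
    simp only [Finset.mem_product, Nat.mem_divisors]
    exact ⟨⟨Nat.gcd_dvd_right _ _, hm⟩, ⟨Nat.gcd_dvd_right _ _, hn⟩⟩
  · rintro ⟨u, v⟩ huv
    simp only [Finset.mem_product, Nat.mem_divisors] at huv
    exact Nat.mem_divisors.mpr ⟨mul_dvd_mul huv.1.1 huv.2.1, mul_ne_zero hm hn⟩
  · intro d hd
    rw [Nat.mem_divisors] at hd
    exact (Nat.gcd_mul_gcd_eq_iff_dvd_mul_of_coprime h).mpr hd.1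
  · rintro ⟨u, v⟩ huv
    simp only [Finset.mem_product, Nat.mem_divisors] at huv
    obtain ⟨⟨hu, _⟩, ⟨hv, _⟩⟩ := huv
    have hcuv : Nat.Coprime u v := Nat.Coprime.coprime_dvd_left hu (Nat.Coprime.coprime_dvd_right hv h)
    have h1 : Nat.gcd (u * v) m = u := by
      apply Nat.dvd_antisymm
      · have hgv : Nat.Coprime (Nat.gcd (u * v) m) v :=
          Nat.Coprime.coprime_dvd_left (Nat.gcd_dvd_right _ _)
            (Nat.Coprime.coprime_dvd_right hv h)
        exact (Nat.Coprime.dvd_of_dvd_mul_right hgv) (Nat.gcd_dvd_left _ _)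
      · exact Nat.dvd_gcd (dvd_mul_right _ _) hu
    have h2 : Nat.gcd (u * v) n = v := by
      apply Nat.dvd_antisymm
      · have hgu : Nat.Coprime (Nat.gcd (u * v) n) u :=
          Nat.Coprime.coprime_dvd_left (Nat.gcd_dvd_right _ _)
            (Nat.Coprime.coprime_dvd_right hu h.symm)
        exact (Nat.Coprime.dvd_of_dvd_mul_left hgu) (Nat.gcd_dvd_left _ _)
      · exact Nat.dvd_gcd (dvd_mul_left _ _) hv
    simp [h1, h2]
  · intro d hd
    rw [Nat.mem_divisors] at hd
    rw [(Nat.gcd_mul_gcd_eq_iff_dvd_mul_of_coprime h).mpr hd.1]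

lemma locF_mul_split (g : ℕ → ℕ → ℕ → ℚ) (hg : ∀ p, g p 0 0 = 1)
    {p : ℕ} (hp : p.Prime) {d e : ℕ} (hd : d ≠ 0) (he : e ≠ 0)
    (hpd : ¬ p ∣ d) (hpe : ¬ p ∣ e) (k l : ℕ) :
    locF g (p ^ k * d) (p ^ l * e) = g p k l * locF g d e := by
  have hde : d * e ≠ 0 := mul_ne_zero hd he
  have hpde : ¬ p ∣ d * e := by
    rw [hp.dvd_mul]; tauto
  have hfac : ∀ m c : ℕ, c ≠ 0 → ¬ p ∣ c → ∀ q,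
      (p ^ m * c).factorization q = if q = p then m else c.factorization q := by
    intro m c hc hpc q
    rw [Nat.factorization_mul (pow_ne_zero _ hp.pos.ne') hc, Nat.Prime.factorization_pow hp]
    by_cases hq : q = p
    · subst hq
      simp [Nat.factorization_eq_zero_of_not_dvd hpc]
    · simp [hq, Finsupp.single_apply, Ne.symm hq]
  rcases Nat.eq_zero_or_pos (k + l) with hkl | hkl
  · obtain ⟨rfl, rfl⟩ : k = 0 ∧ l = 0 := by omega
    simp only [pow_zero, one_mul]
    rw [hg p, one_mul]
  · have hprod : (p ^ k * d) * (p ^ l * e) = p ^ (k + l) * (d * e) := by ring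
    have hpf : ((p ^ k * d) * (p ^ l * e)).primeFactors
        = insert p ((d * e).primeFactors) := by
      rw [hprod, Nat.primeFactors_mul (pow_ne_zero _ hp.pos.ne') hde,
        Nat.primeFactors_pow _ (by omega), hp.primeFactors]
      rfl
    have hpnot : p ∉ (d * e).primeFactors := by
      simp [Nat.mem_primeFactors, hpde]
    rw [locF, hpf, Finset.prod_insert hpnot]
    rw [hfac k d hd hpd p, hfac l e he hpe p]
    simp only [if_pos rfl]
    congr 1
    refine Finset.prod_congr rfl ?_
    intro q hq
    have hqp : q ≠ p := fun hqp => hpnot (hqp ▸ hq)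
    rw [hfac k d hd hpd q, hfac l e he hpe q, if_neg hqp, if_neg hqp]

lemma fact_lemma (g : ℕ → ℕ → ℕ → ℚ) (hg : ∀ p, g p 0 0 = 1) :
    ∀ m x y : ℕ, x * y = m → 0 < x → 0 < y →
    ∑ d ∈ x.divisors, ∑ e ∈ y.divisors, locF g d e
      = ∏ p ∈ (x * y).primeFactors,
          ∑ i ∈ range (x.factorization p + 1), ∑ j ∈ range (y.factorization p + 1), g p i j := by
  intro m
  induction m using Nat.strong_induction_on with
  | _ m IH =>
  intro x y hxy hx hy
  rcases eq_or_ne m 1 with rfl | hm1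
  · have hx1 := Nat.eq_one_of_mul_eq_one_right hxy
    have hy1 := Nat.eq_one_of_mul_eq_one_left hxy
    subst hx1; subst hy1
    simp [locF, hg]
  · have hm0 : m ≠ 0 := by rw [← hxy]; positivity
    set p := m.minFac with hpdef
    have hp : p.Prime := Nat.minFac_prime hm1
    set i := x.factorization p with hidef
    set j := y.factorization p with hjdef
    set x' := x / p ^ i with hx'def
    set y' := y / p ^ j with hy'def
    have hxx : p ^ i * x' = x := Nat.ordProj_mul_ordCompl_eq_self x p
    have hyy : p ^ j * y' = y := Nat.ordProj_mul_ordCompl_eq_self y p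
    have hpx' : ¬ p ∣ x' := Nat.not_dvd_ordCompl hp hx.ne'
    have hpy' : ¬ p ∣ y' := Nat.not_dvd_ordCompl hp hy.ne'
    have hx'0 : x' ≠ 0 := (Nat.ordCompl_pos p hx.ne').ne'
    have hy'0 : y' ≠ 0 := (Nat.ordCompl_pos p hy.ne').ne'
    have hij : 0 < i + j := by
      have hpm : p ∣ m := Nat.minFac_dvd m
      rw [← hxy] at hpm
      rcases (Nat.Prime.dvd_mul hp).mp hpm with hdx | hdy
      · have := (Nat.Prime.factorization_pos_of_dvd hp hx.ne' hdx)
        omega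
      · have := (Nat.Prime.factorization_pos_of_dvd hp hy.ne' hdy)
        omega
    have hcx : Nat.Coprime (p ^ i) x' := Nat.Coprime.pow_left i ((Nat.Prime.coprime_iff_not_dvd hp).mpr hpx')
    have hcy : Nat.Coprime (p ^ j) y' := Nat.Coprime.pow_left j ((Nat.Prime.coprime_iff_not_dvd hp).mpr hpy')
    -- IH applied to x' y'
    have hlt : x' * y' < m := by
      have h2 : 2 ≤ p ^ (i + j) := by
        calc 2 ≤ p := hp.two_le
        _ ≤ p ^ (i+j) := Nat.le_self_pow (by omega) p
      have : m = p ^ (i + j) * (x' * y') := by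
        rw [← hxy, ← hxx, ← hyy]; ring
      have hx'y' : 0 < x' * y' := by positivity
      calc x' * y' < 2 * (x' * y') := by omega
        _ ≤ p ^ (i+j) * (x' * y') := Nat.mul_le_mul_right _ h2
        _ = m := this.symm
    have hIH := IH (x' * y') hlt x' y' rfl (Nat.pos_of_ne_zero hx'0) (Nat.pos_of_ne_zero hy'0)
    -- split the divisor sums
    have hsplitx : ∀ f : ℕ → ℚ, ∑ d ∈ x.divisors, f d
        = ∑ k ∈ range (i + 1), ∑ d' ∈ x'.divisors, f (p ^ k * d') := by
      intro f
      rw [← hxx, sum_divisors_coprime_mul f hcx (pow_ne_zero _ hp.pos.ne') hx'0]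
      rw [Nat.sum_divisors_prime_pow hp]
    have hsplity : ∀ f : ℕ → ℚ, ∑ e ∈ y.divisors, f e
        = ∑ l ∈ range (j + 1), ∑ e' ∈ y'.divisors, f (p ^ l * e') := by
      intro f
      rw [← hyy, sum_divisors_coprime_mul f hcy (pow_ne_zero _ hp.pos.ne') hy'0]
      rw [Nat.sum_divisors_prime_pow hp]
    -- LHS computation
    have hLHS : ∑ d ∈ x.divisors, ∑ e ∈ y.divisors, locF g d e
        = (∑ k ∈ range (i + 1), ∑ l ∈ range (j + 1), g p k l)
          * (∑ d' ∈ x'.divisors, ∑ e' ∈ y'.divisors, locF g d' e') := by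
      rw [hsplitx (fun d => ∑ e ∈ y.divisors, locF g d e)]
      have : ∀ k ∈ range (i+1), ∀ d' ∈ x'.divisors,
          ∑ e ∈ y.divisors, locF g (p ^ k * d') e
          = ∑ l ∈ range (j + 1), ∑ e' ∈ y'.divisors, g p k l * locF g d' e' := by
        intro k _ d' hd'
        rw [hsplity (fun e => locF g (p ^ k * d') e)]
        refine sum_congr rfl fun l _ => sum_congr rfl fun e' he' => ?_
        have hd'0 : d' ≠ 0 := (Nat.pos_of_mem_divisors hd').ne'
        have he'0 : e' ≠ 0 := (Nat.pos_of_mem_divisors he').ne'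
        have hpd' : ¬ p ∣ d' := fun hdvd => hpx' (hdvd.trans (Nat.dvd_of_mem_divisors hd'))
        have hpe' : ¬ p ∣ e' := fun hdvd => hpy' (hdvd.trans (Nat.dvd_of_mem_divisors he'))
        exact locF_mul_split g hg hp hd'0 he'0 hpd' hpe' k l
      calc ∑ k ∈ range (i+1), ∑ d' ∈ x'.divisors, ∑ e ∈ y.divisors, locF g (p ^ k * d') e
          = ∑ k ∈ range (i+1), ∑ d' ∈ x'.divisors,
              ∑ l ∈ range (j + 1), ∑ e' ∈ y'.divisors, g p k l * locF g d' e' := by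
            refine sum_congr rfl fun k hk => sum_congr rfl fun d' hd' => this k hk d' hd'
        _ = (∑ k ∈ range (i + 1), ∑ l ∈ range (j + 1), g p k l)
          * (∑ d' ∈ x'.divisors, ∑ e' ∈ y'.divisors, locF g d' e') := by
            rw [Finset.sum_mul]
            refine sum_congr rfl fun k _ => ?_
            rw [Finset.sum_comm, Finset.sum_mul]
            refine sum_congr rfl fun l _ => ?_
            simp only [← Finset.mul_sum]
    -- RHS computation
    have hprod : x * y = p ^ (i + j) * (x' * y') := by rw [← hxx, ← hyy]; ring
    have hpf : (x * y).primeFactors = insert p ((x' * y').primeFactors) := by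
      rw [hprod, Nat.primeFactors_mul (pow_ne_zero _ hp.pos.ne') (mul_ne_zero hx'0 hy'0),
        Nat.primeFactors_pow _ (by omega), hp.primeFactors]
      rfl
    have hpnot : p ∉ (x' * y').primeFactors := by
      simp only [Nat.mem_primeFactors]
      rintro ⟨-, hdvd, -⟩
      rw [hp.dvd_mul] at hdvd
      tauto
    have hfacx : ∀ q, q ≠ p → x.factorization q = x'.factorization q := by
      intro q hq
      conv_lhs => rw [← hxx]
      rw [Nat.factorization_mul (pow_ne_zero _ hp.pos.ne') hx'0, Nat.Prime.factorization_pow hp]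
      simp [Finsupp.single_apply, Ne.symm hq, hq]
    have hfacy : ∀ q, q ≠ p → y.factorization q = y'.factorization q := by
      intro q hq
      conv_lhs => rw [← hyy]
      rw [Nat.factorization_mul (pow_ne_zero _ hp.pos.ne') hy'0, Nat.Prime.factorization_pow hp]
      simp [Finsupp.single_apply, Ne.symm hq, hq]
    rw [hLHS, hIH, hpf, Finset.prod_insert hpnot]
    congr 1
    refine Finset.prod_congr rfl fun q hq => ?_
    have hqp : q ≠ p := fun h => hpnot (h ▸ hq)
    rw [hfacx q hqp, hfacy q hqp]

lemma Ee_telescope (p : ℕ) (I : ℕ) : ∑ k ∈ range (I + 1), Ee p k = (p:ℚ)^I - 1 := by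
  induction I with
  | zero => simp [Ee]
  | succ I ih =>
    rw [Finset.sum_range_succ, ih, Ee]
    simp only [Nat.succ_ne_zero, if_false, Nat.add_sub_cancel]
    ring

lemma Uu_sum (p : ℕ) (hp : 2 ≤ p) (v : ℕ) :
    ∑ k ∈ range (v + 1), Uu p k
      = 1 + ((p:ℚ)^v - 1) * (p:ℚ) / ((p:ℚ)^v * ((p:ℚ)-1)^2) := by
  have hp0 : (p:ℚ) ≠ 0 := by positivity
  have hp1 : (p:ℚ) - 1 ≠ 0 := by
    have : (2:ℚ) ≤ (p:ℚ) := by exact_mod_cast hp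
    intro h; nlinarith
  induction v with
  | zero => simp [Uu]
  | succ v ih =>
    rw [Finset.sum_range_succ, ih, Uu]
    simp only [Nat.succ_ne_zero, if_false, Nat.add_sub_cancel]
    have hpv : (p:ℚ)^v ≠ 0 := pow_ne_zero _ hp0
    field_simp
    ring

-- diagonal sum helper

lemma diag_sum (f : ℕ → ℚ) (I J : ℕ) :
    ∑ i ∈ range (I + 1), ∑ j ∈ range (J + 1), (if i = j then f i else 0)
      = ∑ k ∈ range (min I J + 1), f k := by
  have h1 : ∀ i, ∑ j ∈ range (J + 1), (if i = j then f i else 0)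
      = if i ∈ range (J + 1) then f i else 0 := by
    intro i
    rw [Finset.sum_ite_eq]
  simp only [h1]
  rw [Finset.sum_ite_mem]
  have : range (I + 1) ∩ range (J + 1) = range (min I J + 1) := by
    ext k
    simp only [Finset.mem_inter, Finset.mem_range]
    omega
  rw [this]

lemma gL_sum (p : ℕ) (I J : ℕ) :
    ∑ i ∈ range (I + 1), ∑ j ∈ range (J + 1), gL p i j = (p:ℚ) ^ (max I J) := by
  simp only [gL]
  have e1 : ∑ i ∈ range (I+1), ∑ j ∈ range (J+1), (if j = 0 then Ee p i else 0)
      = (p:ℚ)^I - 1 := by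
    have : ∀ i, ∑ j ∈ range (J+1), (if j = 0 then Ee p i else 0) = Ee p i := by
      intro i
      rw [Finset.sum_ite_eq' (range (J+1)) 0 (fun _ => Ee p i)]
      simp
    simp only [this, Ee_telescope]
  have e2 : ∑ i ∈ range (I+1), ∑ j ∈ range (J+1), (if i = 0 then Ee p j else 0)
      = (p:ℚ)^J - 1 := by
    rw [Finset.sum_comm]
    have : ∀ j, ∑ i ∈ range (I+1), (if i = 0 then Ee p j else 0) = Ee p j := by
      intro j
      rw [Finset.sum_ite_eq' (range (I+1)) 0 (fun _ => Ee p j)]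
      simp
    simp only [this, Ee_telescope]
  have e3 : ∑ i ∈ range (I+1), ∑ j ∈ range (J+1), (if i = j then Ee p i else 0)
      = (p:ℚ)^(min I J) - 1 := by
    rw [diag_sum, Ee_telescope]
  have e4 : ∑ i ∈ range (I+1), ∑ j ∈ range (J+1), (if i = 0 ∧ j = 0 then (1:ℚ) else 0)
      = 1 := by
    have : ∀ i, ∑ j ∈ range (J+1), (if i = 0 ∧ j = 0 then (1:ℚ) else 0)
        = if i = 0 then 1 else 0 := by
      intro i
      by_cases hi : i = 0
      · subst hi
        simp only [true_and, if_pos rfl]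
        rw [Finset.sum_ite_eq' (range (J+1)) 0 (fun _ => (1:ℚ))]
        simp
      · simp [hi]
    simp only [this]
    rw [Finset.sum_ite_eq' (range (I+1)) 0 (fun _ => (1:ℚ))]
    simp
  simp only [Finset.sum_add_distrib, Finset.sum_sub_distrib, e1, e2, e3, e4]
  have hmm : min I J + max I J = I + J := by omega
  have : (p:ℚ)^I * (p:ℚ)^J = (p:ℚ)^(min I J) * (p:ℚ)^(max I J) := by
    rw [← pow_add, ← pow_add]
    congr 1
    omega
  rcases le_total I J with h | h
  · rw [min_eq_left h, max_eq_right h]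
    have : (p:ℚ)^I - 1 + ((p:ℚ)^J - 1) - ((p:ℚ)^I - 1) + 1 = (p:ℚ)^J := by ring
    exact this
  · rw [min_eq_right h, max_eq_left h]
    have : (p:ℚ)^I - 1 + ((p:ℚ)^J - 1) - ((p:ℚ)^J - 1) + 1 = (p:ℚ)^I := by ring
    exact this

lemma gS_sum (p : ℕ) (hp : 2 ≤ p) (v : ℕ) :
    ∑ i ∈ range (v + 1), ∑ j ∈ range (v + 1), gS p i j
      = 1 + 2 * (v:ℚ) - ((p:ℚ)^v - 1) / ((p:ℚ)^(v-1) * ((p:ℚ)-1)^2) := by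
  have hp0 : (p:ℚ) ≠ 0 := by positivity
  have hp1 : (p:ℚ) - 1 ≠ 0 := by
    have : (2:ℚ) ≤ (p:ℚ) := by exact_mod_cast hp
    intro h; nlinarith
  simp only [gS]
  have e1 : (∑ i ∈ range (v+1), ∑ j ∈ range (v+1), (if j = 0 then (1:ℚ) else 0))
      = (v:ℚ) + 1 := by
    have inner : (∑ j ∈ range (v+1), if j = 0 then (1:ℚ) else 0) = 1 := by
      rw [Finset.sum_ite_eq' (range (v+1)) 0 (fun _ => (1:ℚ))]
      simp
    rw [Finset.sum_congr rfl fun i _ => inner, Finset.sum_const, Finset.card_range,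
      nsmul_eq_mul]
    push_cast; ring
  have e2 : (∑ i ∈ range (v+1), ∑ j ∈ range (v+1), (if i = 0 then (1:ℚ) else 0))
      = (v:ℚ) + 1 := by
    rw [Finset.sum_comm]
    have inner : (∑ i ∈ range (v+1), if i = 0 then (1:ℚ) else 0) = 1 := by
      rw [Finset.sum_ite_eq' (range (v+1)) 0 (fun _ => (1:ℚ))]
      simp
    rw [Finset.sum_congr rfl fun j _ => inner, Finset.sum_const, Finset.card_range,
      nsmul_eq_mul]
    push_cast; ring
  have e3 : ∑ i ∈ range (v+1), ∑ j ∈ range (v+1), (if i = j then Uu p i else 0)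
      = 1 + ((p:ℚ)^v - 1) * (p:ℚ) / ((p:ℚ)^v * ((p:ℚ)-1)^2) := by
    rw [diag_sum, Nat.min_self, Uu_sum p hp]
  simp only [Finset.sum_add_distrib, Finset.sum_sub_distrib, e1, e2, e3]
  have hconv : ((p:ℚ)^v - 1) * (p:ℚ) / ((p:ℚ)^v * ((p:ℚ)-1)^2)
      = ((p:ℚ)^v - 1) / ((p:ℚ)^(v-1) * ((p:ℚ)-1)^2) := by
    rcases Nat.eq_zero_or_pos v with rfl | hv
    · simp
    · have hv' : (p:ℚ)^v = (p:ℚ)^(v-1) * (p:ℚ) := by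
        rw [← pow_succ]
        congr 1
        omega
      rw [hv']
      have h1 : (p:ℚ)^(v-1) ≠ 0 := pow_ne_zero _ hp0
      field_simp
  rw [hconv]
  ring

lemma gL_eq_gS (p : ℕ) (hp : 2 ≤ p) (i j : ℕ) :
    gL p i j = gS p i j * (PhiQ p i * PhiQ p j) := by
  have hp0 : (p:ℚ) ≠ 0 := by positivity
  have hp1 : (p:ℚ) - 1 ≠ 0 := by
    have : (2:ℚ) ≤ (p:ℚ) := by exact_mod_cast hp
    intro h; nlinarith
  have hD : ∀ k : ℕ, (p:ℚ)^(k-1)*((p:ℚ)-1) ≠ 0 := fun k =>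
    mul_ne_zero (pow_ne_zero _ hp0) hp1
  unfold gL gS Ee Uu PhiQ
  by_cases hi : i = 0 <;> by_cases hj : j = 0 <;> by_cases hij : i = j <;>
    simp only [hi, hj, hij, if_pos, if_neg, and_true, and_false, true_and, false_and,
      if_true, if_false, eq_self_iff_true, not_true, not_false_iff] <;>
    first
      | (subst hij; simp_all; try field_simp)
      | simp_all
      | (field_simp; ring)
  all_goals try (field_simp)
  all_goals try ring

lemma totient_eq_PhiQ_prod {d : ℕ} (hd : d ≠ 0) {S : Finset ℕ}
    (hS : d.primeFactors ⊆ S) :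
    (d.totient : ℚ) = ∏ p ∈ S, PhiQ p (d.factorization p) := by
  have base : (d.totient : ℚ) = ∏ p ∈ d.primeFactors, PhiQ p (d.factorization p) := by
    rw [Nat.totient_eq_prod_factorization hd, Finsupp.prod, Nat.support_factorization]
    push_cast
    refine Finset.prod_congr rfl fun p hp => ?_
    have hpp : p.Prime := Nat.prime_of_mem_primeFactors hp
    have hk : d.factorization p ≠ 0 := by
      rw [← Finsupp.mem_support_iff, Nat.support_factorization]
      exact hp
    rw [PhiQ, if_neg hk]
    push_cast [Nat.cast_sub hpp.one_le]
    ring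
  rw [base]
  refine Finset.prod_subset hS fun p _ hpn => ?_
  have : d.factorization p = 0 := by
    rw [← Finsupp.notMem_support_iff, Nat.support_factorization]
    exact hpn
  simp [PhiQ, this]

lemma L1 {x y : ℕ} (hx : 0 < x) (hy : 0 < y) :
    (Nat.lcm x y : ℚ) = ∑ d ∈ x.divisors, ∑ e ∈ y.divisors, locF gL d e := by
  rw [fact_lemma gL gL_zero (x * y) x y rfl hx hy]
  rw [Finset.prod_congr rfl fun p _ => gL_sum p (x.factorization p) (y.factorization p)]
  have hlcm : Nat.lcm x y ≠ 0 := Nat.lcm_ne_zero hx.ne' hy.ne'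
  have hpf : (Nat.lcm x y).primeFactors = (x * y).primeFactors := by
    ext q
    simp only [Nat.mem_primeFactors, hlcm, mul_ne_zero hx.ne' hy.ne', ne_eq,
      not_false_iff, and_true]
    constructor
    · rintro ⟨hq, hdvd⟩
      exact ⟨hq, hdvd.trans (Nat.lcm_dvd (dvd_mul_right x y) (dvd_mul_left y x))⟩
    · rintro ⟨hq, hdvd⟩
      rcases (Nat.Prime.dvd_mul hq).mp hdvd with h | h
      · exact ⟨hq, h.trans (Nat.dvd_lcm_left x y)⟩
      · exact ⟨hq, h.trans (Nat.dvd_lcm_right x y)⟩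
  conv_lhs => rw [← Nat.factorization_prod_pow_eq_self hlcm]
  rw [Finsupp.prod, Nat.support_factorization, hpf]
  push_cast
  refine Finset.prod_congr rfl fun p _ => ?_
  rw [Nat.factorization_lcm hx.ne' hy.ne', Finsupp.sup_apply]

lemma cast_one_sub_dvd_iff {d a : ℕ} [NeZero d] (ha : 1 ≤ a) :
    d ∣ a - 1 ↔ (a : ZMod d) = 1 := by
  obtain ⟨a', rfl⟩ : ∃ a', a = a' + 1 := ⟨a - 1, by omega⟩
  simp only [Nat.add_sub_cancel]
  rw [← ZMod.natCast_eq_zero_iff]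
  push_cast
  constructor
  · intro h; rw [h]; ring
  · intro h
    have := congrArg (fun z => z - 1) h
    simpa using this

lemma count_lemma {n d : ℕ} (hn : 2 ≤ n) (hd : d ∣ n) :
    ((Finset.Icc 1 n).filter (fun a => Nat.gcd a n = 1 ∧ d ∣ a - 1)).card * d.totient
      = n.totient := by
  classical
  have hn0 : NeZero n := ⟨by omega⟩
  have hd0 : d ≠ 0 := fun h => by subst h; omega
  have hd0' : NeZero d := ⟨hd0⟩
  set f := ZMod.unitsMap hd with hf
  have hsurj : Function.Surjective f := ZMod.unitsMap_surjective hd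
  have hker : Nat.card f.ker * d.totient = n.totient := by
    have h1 : Nat.card (ZMod n)ˣ = Nat.card ((ZMod n)ˣ ⧸ f.ker) * Nat.card f.ker :=
      Subgroup.card_eq_card_quotient_mul_card_subgroup f.ker
    have h2 : Nat.card ((ZMod n)ˣ ⧸ f.ker) = Nat.card (ZMod d)ˣ :=
      Nat.card_congr (QuotientGroup.quotientKerEquivOfSurjective f hsurj).toEquiv
    have h3 : Nat.card (ZMod n)ˣ = n.totient := by
      rw [Nat.card_eq_fintype_card, ZMod.card_units_eq_totient]
    have h4 : Nat.card (ZMod d)ˣ = d.totient := by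
      rw [Nat.card_eq_fintype_card, ZMod.card_units_eq_totient]
    rw [h3, h2, h4] at h1
    rw [mul_comm] at h1
    omega
  have hcast : ∀ u : (ZMod n)ˣ, ((f u : ZMod d)) = ((u : ZMod n).val : ZMod d) := by
    intro u
    rw [hf]
    show ((ZMod.castHom hd (ZMod d)) (u : ZMod n) : ZMod d) = _
    rw [ZMod.castHom_apply, ZMod.natCast_val]
  have hcard : ((Finset.Icc 1 n).filter (fun a => Nat.gcd a n = 1 ∧ d ∣ a - 1)).card
      = (univ.filter (fun u : (ZMod n)ˣ => f u = 1)).card := by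
    refine Finset.card_bij'
      (fun a ha => ZMod.unitOfCoprime a (by
        simp only [Finset.mem_filter] at ha
        exact ha.2.1))
      (fun u hu => (u : ZMod n).val) ?_ ?_ ?_ ?_
    · intro a ha
      simp only [Finset.mem_filter, Finset.mem_Icc] at ha
      obtain ⟨⟨ha1, han⟩, hcop, hdvd⟩ := ha
      simp only [Finset.mem_filter, Finset.mem_univ, true_and]
      apply Units.ext
      rw [hcast]
      show (((ZMod.unitOfCoprime a hcop : ZMod n)).val : ZMod d) = ((1 : (ZMod d)ˣ) : ZMod d)
      rw [ZMod.coe_unitOfCoprime]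
      have halt : a < n := by
        rcases Nat.lt_or_ge a n with h | h
        · exact h
        · exfalso
          have : a = n := by omega
          subst this
          rw [Nat.gcd_self] at hcop
          omega
      rw [ZMod.val_natCast_of_lt halt]
      rw [Units.val_one]
      exact (cast_one_sub_dvd_iff ha1).mp hdvd
    · intro u hu
      simp only [Finset.mem_filter, Finset.mem_univ, true_and] at hu
      simp only [Finset.mem_filter, Finset.mem_Icc]
      have hcop := ZMod.val_coe_unit_coprime u
      have hvlt : (u : ZMod n).val < n := ZMod.val_lt _
      have hvne : (u : ZMod n).val ≠ 0 := by
        intro h0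
        rw [h0] at hcop
        have : Nat.gcd 0 n = n := Nat.gcd_zero_left n
        rw [Nat.Coprime] at hcop
        omega
      refine ⟨⟨by omega, by omega⟩, hcop, ?_⟩
      rw [cast_one_sub_dvd_iff (by omega)]
      have := congrArg (fun u : (ZMod d)ˣ => (u : ZMod d)) hu
      rw [hcast] at this
      rw [this, Units.val_one]
    · intro a ha
      simp only [Finset.mem_filter, Finset.mem_Icc] at ha
      obtain ⟨⟨ha1, han⟩, hcop, hdvd⟩ := ha
      have halt : a < n := by
        rcases Nat.lt_or_ge a n with h | h
        · exact h
        · exfalso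
          have : a = n := by omega
          subst this
          rw [Nat.gcd_self] at hcop
          omega
      show ((ZMod.unitOfCoprime a hcop : ZMod n)).val = a
      rw [ZMod.coe_unitOfCoprime, ZMod.val_natCast_of_lt halt]
    · intro u hu
      apply Units.ext
      show (((u : ZMod n).val : ZMod n)) = (u : ZMod n)
      rw [ZMod.natCast_val, ZMod.cast_id]
  rw [hcard]
  rw [← hker]
  congr 1
  rw [Nat.card_eq_fintype_card, ← Fintype.card_subtype]
  apply Fintype.card_congr
  exact Equiv.subtypeEquivRight (fun u => MonoidHom.mem_ker)

lemma locF_gL_eq {d e : ℕ} (hd : d ≠ 0) (he : e ≠ 0) :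
    locF gL d e = locF gS d e * (d.totient : ℚ) * (e.totient : ℚ) := by
  have hprim : ∀ p ∈ (d*e).primeFactors, 2 ≤ p := fun p hp =>
    (Nat.prime_of_mem_primeFactors hp).two_le
  have hsub1 : d.primeFactors ⊆ (d*e).primeFactors := by
    rw [Nat.primeFactors_mul hd he]; exact Finset.subset_union_left
  have hsub2 : e.primeFactors ⊆ (d*e).primeFactors := by
    rw [Nat.primeFactors_mul hd he]; exact Finset.subset_union_right
  rw [locF, Finset.prod_congr rfl (fun p hp => gL_eq_gS p (hprim p hp) _ _),
    Finset.prod_mul_distrib, Finset.prod_mul_distrib]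
  rw [locF, ← totient_eq_PhiQ_prod hd hsub1, ← totient_eq_PhiQ_prod he hsub2]
  ring

lemma swap_count {α : Type*} [DecidableEq α] (A : Finset α) (D : Finset ℕ)
    (P : α → ℕ → Prop) [∀ a d, Decidable (P a d)] (F : ℕ → ℚ) :
    ∑ a ∈ A, ∑ d ∈ D.filter (fun d => P a d), F d
      = ∑ d ∈ D, ((A.filter (fun a => P a d)).card : ℚ) * F d := by
  simp only [Finset.sum_filter]
  rw [Finset.sum_comm]
  refine Finset.sum_congr rfl fun d _ => ?_
  rw [← Finset.sum_filter, Finset.sum_const, nsmul_eq_mul]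

theorem menon_lcm_two (n : ℕ) (hn : 0 < n) :
    (∑ a ∈ (Finset.Icc 1 n).filter (fun a => Nat.gcd a n = 1),
      ∑ b ∈ (Finset.Icc 1 n).filter (fun b => Nat.gcd b n = 1),
        (Nat.lcm (Nat.gcd (a - 1) n) (Nat.gcd (b - 1) n) : ℚ))
      = (n.totient : ℚ) ^ 2 *
        ∏ p ∈ n.primeFactors,
          (1 + 2 * (n.factorization p : ℚ)
            - ((p : ℚ) ^ (n.factorization p) - 1) /
              ((p : ℚ) ^ (n.factorization p - 1) * ((p : ℚ) - 1) ^ 2)) := by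
  classical
  rcases eq_or_lt_of_le (Nat.succ_le_of_lt hn) with h1 | hn2
  · -- n = 1
    have : n = 1 := h1.symm
    subst this
    norm_num
  · have hn2' : 2 ≤ n := hn2
    have hn0 : n ≠ 0 := by omega
    set A := (Finset.Icc 1 n).filter (fun a => Nat.gcd a n = 1) with hA
    set D := n.divisors with hD
    -- Step 1: expand each lcm via divisor sums
    have hdiva : ∀ a, (Nat.gcd (a - 1) n).divisors = D.filter (fun d => d ∣ a - 1) := by
      intro a
      ext d
      simp only [Nat.mem_divisors, Finset.mem_filter, hD]
      constructor
      · rintro ⟨hdg, -⟩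
        exact ⟨⟨hdg.trans (Nat.gcd_dvd_right _ _), hn0⟩, hdg.trans (Nat.gcd_dvd_left _ _)⟩
      · rintro ⟨⟨hdn, -⟩, hda⟩
        exact ⟨Nat.dvd_gcd hda hdn, (Nat.gcd_pos_of_pos_right _ hn).ne'⟩
    have step1 : ∀ a b : ℕ,
        (Nat.lcm (Nat.gcd (a - 1) n) (Nat.gcd (b - 1) n) : ℚ)
          = ∑ d ∈ D.filter (fun d => d ∣ a - 1), ∑ e ∈ D.filter (fun e => e ∣ b - 1),
              locF gL d e := by
      intro a b
      rw [L1 (Nat.gcd_pos_of_pos_right _ hn) (Nat.gcd_pos_of_pos_right _ hn),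
        hdiva a, hdiva b]
    -- counts
    have hcount : ∀ d ∈ D, ((A.filter (fun a => d ∣ a - 1)).card : ℚ) * (d.totient : ℚ)
        = (n.totient : ℚ) := by
      intro d hdD
      have hdvd : d ∣ n := Nat.dvd_of_mem_divisors hdD
      have := count_lemma hn2' hdvd
      rw [hA, Finset.filter_filter]
      exact_mod_cast congrArg (fun k : ℕ => (k : ℚ)) this
    -- swap sums
    have main : ∑ a ∈ A, ∑ b ∈ A,
        (Nat.lcm (Nat.gcd (a - 1) n) (Nat.gcd (b - 1) n) : ℚ)
        = ∑ d ∈ D, ((A.filter (fun a => d ∣ a - 1)).card : ℚ)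
            * ∑ e ∈ D, ((A.filter (fun b => e ∣ b - 1)).card : ℚ) * locF gL d e := by
      rw [← swap_count A D (fun a d => d ∣ a - 1)
        (fun d => ∑ e ∈ D, ((A.filter (fun b => e ∣ b - 1)).card : ℚ) * locF gL d e)]
      refine Finset.sum_congr rfl fun a _ => ?_
      calc ∑ b ∈ A, (Nat.lcm (Nat.gcd (a - 1) n) (Nat.gcd (b - 1) n) : ℚ)
          = ∑ b ∈ A, ∑ d ∈ D.filter (fun d => d ∣ a - 1),
              ∑ e ∈ D.filter (fun e => e ∣ b - 1), locF gL d e := by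
            exact Finset.sum_congr rfl fun b _ => step1 a b
        _ = ∑ d ∈ D.filter (fun d => d ∣ a - 1), ∑ b ∈ A,
              ∑ e ∈ D.filter (fun e => e ∣ b - 1), locF gL d e := Finset.sum_comm
        _ = ∑ d ∈ D.filter (fun d => d ∣ a - 1),
              ∑ e ∈ D, ((A.filter (fun b => e ∣ b - 1)).card : ℚ) * locF gL d e := by
            exact Finset.sum_congr rfl fun d _ =>
              swap_count A D (fun b e => e ∣ b - 1) (fun e => locF gL d e)
    rw [main]
    -- replace locF gL with totient-scaled locF gS and simplify counts
    have step2 : ∑ d ∈ D, ((A.filter (fun a => d ∣ a - 1)).card : ℚ)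
            * ∑ e ∈ D, ((A.filter (fun b => e ∣ b - 1)).card : ℚ) * locF gL d e
        = (n.totient : ℚ)^2 * ∑ d ∈ D, ∑ e ∈ D, locF gS d e := by
      rw [Finset.mul_sum]
      refine Finset.sum_congr rfl fun d hd => ?_
      rw [Finset.mul_sum, Finset.mul_sum]
      refine Finset.sum_congr rfl fun e he => ?_
      have hd0 : d ≠ 0 := (Nat.pos_of_mem_divisors hd).ne'
      have he0 : e ≠ 0 := (Nat.pos_of_mem_divisors he).ne'
      rw [locF_gL_eq hd0 he0]
      have h1 := hcount d hd
      have h2 := hcount e he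
      calc ((A.filter (fun a => d ∣ a - 1)).card : ℚ)
            * (((A.filter (fun b => e ∣ b - 1)).card : ℚ)
              * (locF gS d e * (d.totient : ℚ) * (e.totient : ℚ)))
          = (((A.filter (fun a => d ∣ a - 1)).card : ℚ) * (d.totient : ℚ))
            * ((((A.filter (fun b => e ∣ b - 1)).card : ℚ)) * (e.totient : ℚ))
            * locF gS d e := by ring
        _ = (n.totient : ℚ) * (n.totient : ℚ) * locF gS d e := by rw [h1, h2]
        _ = (n.totient : ℚ)^2 * locF gS d e := by ring
    rw [step2]
    congr 1
    -- finally, evaluate the gS double divisor sum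
    rw [hD, fact_lemma gS gS_zero (n * n) n n rfl hn hn]
    have hpf : (n * n).primeFactors = n.primeFactors := by
      rw [Nat.primeFactors_mul hn0 hn0, Finset.union_self]
    rw [hpf]
    refine Finset.prod_congr rfl fun p hp => ?_
    exact gS_sum p (Nat.prime_of_mem_primeFactors hp).two_le (n.factorization p)
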